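/- Let S be a finite set of size N ≥ 2 and let C be the class of strict linear orders on S, viewed as concepts over the instance space of ordered pairs of distinct elements of S. Then VCD(C) = N - 1: C shatters some set of N-1 ordered pairs, and shatters no set of N ordered pairs. -/

import Mathlib

/-- A concept class `C` shatters `Y` if every subset of `Y` is cut out by some concept. -/
def Shatters {α : Type*} (C : Set (Set α)) (Y : Set α) : Prop :=
  ∀ Z ⊆ Y, ∃ c ∈ C, Y ∩ c = Z

/-- The VC dimension of a concept class: the largest cardinality of a shattered set. -/
noncomputable def VCD {α : Type*} (C : Set (Set α)) : ℕ :=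
  sSup { d : ℕ | ∃ Y : Finset α, Shatters C ↑Y ∧ Y.card = d }

/-- The class of strict linear orders on `α`, viewed as concepts over the
instance space of ordered pairs of distinct elements. -/
def linearOrderClass (α : Type*) : Set (Set { p : α × α // p.1 ≠ p.2 }) :=
  { c | ∃ r : α → α → Prop, Irreflexive r ∧ Transitive r ∧
      (∀ a b : α, a ≠ b → r a b ∨ r b a) ∧ c = { p | r p.val.1 p.val.2 } }

set_option linter.unreachableTactic false
set_option linter.unusedTactic false


/-- Weight function: starts at 0, the `k`-th step moves by `±2^k` according to `ε k`. -/
def vcOscil (ε : ℕ → Bool) : ℕ → ℤ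
  | 0 => 0
  | k+1 => vcOscil ε k + (if ε k then (2:ℤ)^k else -(2^k))

lemma vcOscil_not_dvd (ε : ℕ → Bool) {i j : ℕ} (hij : i < j) :
    ¬ ((2:ℤ)^(i+1) ∣ vcOscil ε j - vcOscil ε i) := by
  induction j, hij using Nat.le_induction with
  | base =>
      have h2 : ¬ ((2:ℤ)^(i+1) ∣ (2:ℤ)^i) := by
        intro h
        have := Int.le_of_dvd (by positivity) h
        have : (2:ℤ)^(i+1) ≤ 2^i := this
        have hlt : (2:ℤ)^i < 2^(i+1) := by
          have := pow_lt_pow_right₀ (by norm_num : (1:ℤ) < 2) (Nat.lt_succ_self i)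
          exact this
        omega
      simp only [vcOscil]
      rcases Bool.eq_false_or_eq_true (ε i) with h | h <;> simp [h] <;>
        simpa [dvd_neg] using h2
  | succ n hn ih =>
      intro h
      apply ih
      have hd : ((2:ℤ)^(i+1)) ∣ (if ε n then (2:ℤ)^n else -(2^n)) := by
        have : ((2:ℤ)^(i+1)) ∣ (2:ℤ)^n := pow_dvd_pow 2 hn
        rcases Bool.eq_false_or_eq_true (ε n) with h' | h' <;> simp [h', dvd_neg, this]
      have : vcOscil ε (n+1) - vcOscil ε i
          = (vcOscil ε n - vcOscil ε i) + (if ε n then (2:ℤ)^n else -(2^n)) := by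
        simp [vcOscil]; ring
      rw [this] at h
      simpa using dvd_sub h hd

lemma vcOscil_injective (ε : ℕ → Bool) : Function.Injective (vcOscil ε) := by
  intro i j h
  by_contra hne
  rcases Nat.lt_or_ge i j with hij | hij
  · exact vcOscil_not_dvd ε hij (by simp [h])
  · have hji : j < i := lt_of_le_of_ne hij (Ne.symm hne)
    exact vcOscil_not_dvd ε hji (by simp [h])

lemma vcOscil_lt_succ (ε : ℕ → Bool) (k : ℕ) :
    vcOscil ε k < vcOscil ε (k+1) ↔ ε k = true := by
  have : (0:ℤ) < 2^k := by positivity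
  rcases Bool.eq_false_or_eq_true (ε k) with h | h <;> simp [vcOscil, h] <;> omega

lemma vc_lower {α : Type*} [Fintype α] {M : ℕ} (hM : Fintype.card α = M + 1) :
    ∃ Y : Finset {p : α × α // p.1 ≠ p.2},
      Shatters (linearOrderClass α) ↑Y ∧ Y.card = M := by
  classical
  set e : Fin (M+1) ≃ α := (Fintype.equivFinOfCardEq hM).symm with he
  have hq : ∀ i : Fin M, e i.castSucc ≠ e i.succ := fun i =>
    e.injective.ne (Fin.castSucc_lt_succ : i.castSucc < i.succ).ne
  set q : Fin M → {p : α × α // p.1 ≠ p.2} :=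
    fun i => ⟨(e i.castSucc, e i.succ), hq i⟩ with hqdef
  have hqinj : Function.Injective q := by
    intro i j hij
    have : e i.castSucc = e j.castSucc := congrArg (fun p => p.val.1) hij
    have := e.injective this
    exact Fin.castSucc_injective _ this
  refine ⟨Finset.univ.image q, ?_, ?_⟩
  · intro Z hZ
    set ε : ℕ → Bool := fun k => if h : ∃ hk : k < M, q ⟨k, hk⟩ ∈ Z then true else false
      with hε
    set f : α → ℤ := fun a => vcOscil ε (e.symm a) with hf
    have hfinj : Function.Injective f := by
      intro a b hab
      have := vcOscil_injective ε hab
      have : e.symm a = e.symm b := Fin.ext this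
      exact e.symm.injective this
    refine ⟨{p | f p.val.1 < f p.val.2}, ⟨fun a b => f a < f b, ?_, ?_, ?_, rfl⟩, ?_⟩
    · intro a; simp
    · intro a b c h1 h2; exact lt_trans h1 h2
    · intro a b hab
      rcases lt_or_gt_of_ne (fun h => hab (hfinj h)) with h | h
      · exact Or.inl h
      · exact Or.inr h
    · -- ↑(univ.image q) ∩ {p | f p.1 < f p.2} = Z
      ext p
      simp only [Set.mem_inter_iff, Finset.coe_image, Set.mem_image, Finset.coe_univ,
        Set.image_univ, Set.mem_range, Set.mem_setOf_eq]
      constructor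
      · rintro ⟨⟨i, rfl⟩, hlt⟩
        have h1 : (e.symm (e i.castSucc) : ℕ) = (i : ℕ) := by simp
        have h2 : (e.symm (e i.succ) : ℕ) = (i : ℕ) + 1 := by simp
        rw [hf] at hlt
        simp only at hlt
        rw [h1, h2] at hlt
        have := (vcOscil_lt_succ ε i).mp hlt
        rw [hε] at this
        simp only at this
        split at this
        · rename_i hex
          obtain ⟨hk, hmem⟩ := hex
          have : q ⟨(i:ℕ), hk⟩ = q i := by congr 1
          rwa [this] at hmem
        · simp at this
      · intro hpZ
        have hpY := hZ hpZ
        obtain ⟨i, rfl⟩ := by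
          simpa only [Finset.coe_image, Set.mem_image, Finset.coe_univ, Set.image_univ,
            Set.mem_range] using hpY
        refine ⟨⟨i, rfl⟩, ?_⟩
        have h1 : (e.symm (e i.castSucc) : ℕ) = (i : ℕ) := by simp
        have h2 : (e.symm (e i.succ) : ℕ) = (i : ℕ) + 1 := by simp
        rw [hf]; simp only; rw [h1, h2]
        rw [vcOscil_lt_succ]
        rw [hε]; simp only
        rw [dif_pos ⟨i.isLt, by rwa [show (⟨(i:ℕ), i.isLt⟩ : Fin M) = i from Fin.ext rfl]⟩]
  · rw [Finset.card_image_of_injective _ hqinj, Finset.card_univ, Fintype.card_fin]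


/-- A shattered family cannot contain both orientations of a pair. -/
lemma vc_no_both {α : Type*} {Y : Finset { p : α × α // p.1 ≠ p.2 }}
    (hsh : Shatters (linearOrderClass α) ↑Y) {a b : α} {h1 : (a, b).1 ≠ (a, b).2}
    {h2 : (b, a).1 ≠ (b, a).2} (m1 : (⟨(a, b), h1⟩ : { p : α × α // p.1 ≠ p.2 }) ∈ Y)
    (m2 : (⟨(b, a), h2⟩ : { p : α × α // p.1 ≠ p.2 }) ∈ Y) : False := by
  obtain ⟨c, ⟨r, hirr, htr, _, rfl⟩, hYc⟩ := hsh ↑Y (subset_refl _)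
  have hsub : (↑Y : Set _) ⊆ {p : { p : α × α // p.1 ≠ p.2 } | r p.val.1 p.val.2} := by
    intro p hp
    have hmem : p ∈ (↑Y : Set _) ∩ {p : { p : α × α // p.1 ≠ p.2 } | r p.val.1 p.val.2} := by
      rw [hYc]; exact hp
    exact hmem.2
  have hab : r a b := hsub m1
  have hba : r b a := hsub m2
  exact hirr a (htr hab hba)

/-- Shattering is monotone under subsets. -/
lemma vc_shatters_mono {α : Type*} {C : Set (Set α)} {Y Y' : Set α}
    (hsh : Shatters C Y) (hsub : Y' ⊆ Y) : Shatters C Y' := by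
  intro Z hZ
  obtain ⟨c, hc, hYc⟩ := hsh Z (hZ.trans hsub)
  refine ⟨c, hc, ?_⟩
  apply Set.Subset.antisymm
  · intro p hp
    have : p ∈ Y ∩ c := ⟨hsub hp.1, hp.2⟩
    rw [hYc] at this; exact this
  · intro p hp
    have hmem : p ∈ Y ∩ c := by rw [hYc]; exact hp
    exact ⟨hZ hp, hmem.2⟩


/-- In a nonempty shattered family there is a vertex incident to exactly one pair. -/
lemma vc_leaf {α : Type*} [Fintype α] {Y : Finset { p : α × α // p.1 ≠ p.2 }}
    (hsh : Shatters (linearOrderClass α) ↑Y) (hne : Y.Nonempty) :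
    ∃ p ∈ Y, ∃ u, (u = p.val.1 ∨ u = p.val.2) ∧
      ∀ q ∈ Y, (q.val.1 = u ∨ q.val.2 = u) → q = p := by
  classical
  by_contra hcon
  push_neg at hcon
  -- adjacency relation of the underlying graph
  set Adj : α → α → Prop := fun a b => ∃ p ∈ Y, p.val = (a, b) ∨ p.val = (b, a) with hAdjDef
  have hAdj_ne : ∀ {a b}, Adj a b → a ≠ b := by
    rintro a b ⟨p, hpY, hp | hp⟩
    · intro h; exact p.2 (by rw [hp]; simpa using h)
    · intro h; exact p.2 (by rw [hp]; simpa using h.symm)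
  have hAdj_symm : ∀ {a b}, Adj a b → Adj b a := by
    rintro a b ⟨p, hpY, hp | hp⟩
    · exact ⟨p, hpY, Or.inr hp⟩
    · exact ⟨p, hpY, Or.inl hp⟩
  -- every vertex attached to an edge has an escape continuing the walk
  have step : ∀ a b, Adj a b → ∃ c, Adj b c ∧ c ≠ a := by
    rintro a b ⟨p, hpY, hp⟩
    have hub : b = p.val.1 ∨ b = p.val.2 := by
      rcases hp with hp | hp <;> rw [hp] <;> simp
    obtain ⟨q, hqY, hqinc, hqp⟩ := hcon p hpY b hub
    -- w : the other endpoint of q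
    rcases hqinc with hq1 | hq2
    · refine ⟨q.val.2, ⟨q, hqY, Or.inl (by rw [← hq1])⟩, ?_⟩
      intro hwa
      -- q.val = (b, a); p.val = (a,b) or (b,a)
      have hqval : q.val = (b, a) := by
        rw [← hq1, ← hwa]
      rcases hp with hp | hp
      · exact vc_no_both hsh (h1 := by rw [← hp]; exact p.2) (h2 := by rw [← hqval]; exact q.2)
          (by convert hpY using 2; exact hp.symm) (by convert hqY using 2; exact hqval.symm)
      · exact hqp (Subtype.ext (hqval.trans hp.symm))
    · refine ⟨q.val.1, ⟨q, hqY, Or.inr (by rw [← hq2])⟩, ?_⟩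
      intro hwa
      have hqval : q.val = (a, b) := by
        rw [← hq2, ← hwa]
      rcases hp with hp | hp
      · exact hqp (Subtype.ext (hqval.trans hp.symm))
      · exact vc_no_both hsh (h1 := by rw [← hqval]; exact q.2) (h2 := by rw [← hp]; exact p.2)
          (by convert hqY using 2; exact hqval.symm) (by convert hpY using 2; exact hp.symm)
  choose nxt hnxt1 hnxt2 using step
  obtain ⟨p₀, hp₀⟩ := hne
  have adj₀ : Adj p₀.val.1 p₀.val.2 := ⟨p₀, hp₀, Or.inl rfl⟩
  -- total next-function
  set nxt' : α → α → α := fun a b => if h : Adj a b then nxt a b h else a with hnxt'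
  have hnxt'eq : ∀ a b (h : Adj a b), nxt' a b = nxt a b h := fun a b h => dif_pos h
  -- the walk
  set g : ℕ → α × α := fun n =>
    Nat.rec (p₀.val.1, p₀.val.2) (fun _ ih => (ih.2, nxt' ih.1 ih.2)) n with hg
  have hgadj : ∀ n, Adj (g n).1 (g n).2 := by
    intro n
    induction n with
    | zero => exact adj₀
    | succ n ih =>
        show Adj (g n).2 (nxt' (g n).1 (g n).2)
        rw [hnxt'eq _ _ ih]
        exact hnxt1 _ _ ih
  set v : ℕ → α := fun n => (g n).1 with hv
  have hvsucc : ∀ n, v (n + 1) = (g n).2 := fun n => rfl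
  have hadjv : ∀ n, Adj (v n) (v (n + 1)) := fun n => hgadj n
  have hnev : ∀ n, v n ≠ v (n + 1) := fun n => hAdj_ne (hadjv n)
  have hback : ∀ n, v (n + 2) ≠ v n := by
    intro n
    have h1 : v (n + 2) = nxt' (g n).1 (g n).2 := rfl
    rw [h1, hnxt'eq _ _ (hgadj n)]
    exact hnxt2 _ _ (hgadj n)
  -- pigeonhole: the walk revisits a vertex
  have hPex : ∃ j, ∃ i, i < j ∧ v i = v j := by
    obtain ⟨x, y, hxy, hvxy⟩ := Finite.exists_ne_map_eq_of_infinite v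
    rcases lt_or_gt_of_ne hxy with h | h
    · exact ⟨y, x, h, hvxy⟩
    · exact ⟨x, y, h, hvxy.symm⟩
  set j := Nat.find hPex with hj
  obtain ⟨i, hij, hvij⟩ := Nat.find_spec hPex
  rw [← hj] at hij hvij
  have hinj : ∀ a b, a < b → b < j → v a ≠ v b := by
    intro a b hab hbj hv'
    exact Nat.find_min hPex hbj ⟨a, hab, hv'⟩
  have hj3 : i + 3 ≤ j := by
    by_contra hlt
    have : j = i + 1 ∨ j = i + 2 := by omega
    rcases this with h | h
    · rw [h] at hvij; exact hnev i hvij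
    · rw [h] at hvij; exact hback i hvij.symm
  -- the cycle-orienting subset
  set Z : Set { p : α × α // p.1 ≠ p.2 } :=
    ↑Y ∩ {p | ∃ k, i ≤ k ∧ k < j ∧ p.val = (v k, v (k + 1))} with hZdef
  obtain ⟨c, ⟨r, hirr, htr, htot, rfl⟩, hYc⟩ := hsh Z Set.inter_subset_left
  have hstep : ∀ k, i ≤ k → k < j → r (v k) (v (k + 1)) := by
    intro k hik hkj
    obtain ⟨p, hpY, hp⟩ := hadjv k
    rcases hp with hp | hp
    · have hpZ : p ∈ Z := ⟨hpY, ⟨k, hik, hkj, hp⟩⟩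
      rw [← hYc] at hpZ
      have := hpZ.2
      rw [Set.mem_setOf_eq, hp] at this
      exact this
    · -- reversed pair: show it is not selected, then use totality
      have hpnZ : p ∉ Z := by
        rintro ⟨-, m, him, hmj, hpm⟩
        rw [hp] at hpm
        have e1 : v m = v (k + 1) := (Prod.mk.injEq _ _ _ _ ▸ hpm).1.symm
        have e2 : v (m + 1) = v k := (Prod.mk.injEq _ _ _ _ ▸ hpm).2.symm
        by_cases hk1 : k + 1 < j
        · have hmk : m = k + 1 := by
            by_contra hne'
            rcases lt_or_gt_of_ne hne' with h | h
            · exact hinj m (k + 1) h hk1 e1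
            · exact hinj (k + 1) m h hmj e1.symm
          subst hmk
          by_cases hk2 : k + 2 < j
          · exact hinj k (k + 2) (by omega) hk2 e2.symm
          · have hkj2 : k + 2 = j := by omega
            have : v i = v k := by rw [hvij, ← hkj2]; exact e2
            rcases Nat.lt_or_ge i k with h | h
            · exact hinj i k h (by omega) this
            · have : i = k := by omega
              omega
        · have hkj1 : k + 1 = j := by omega
          have e1' : v m = v i := by rw [e1, hkj1, ← hvij]
          have hmi : m = i := by
            rcases Nat.lt_or_ge i m with h | h
            · exact absurd e1'.symm (hinj i m h hmj)
            · omega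
          rcases Nat.lt_trichotomy (m + 1) k with h | h | h
          · exact hinj (m + 1) k h (by omega) e2
          · omega
          · have hk : k = m := by omega
            rw [hk] at e2
            exact hnev m e2.symm
      rw [← hYc] at hpnZ
      have hpnc : p ∉ {p : { p : α × α // p.1 ≠ p.2 } | r p.val.1 p.val.2} := by
        intro hc; exact hpnZ ⟨hpY, hc⟩
      rw [Set.mem_setOf_eq, hp] at hpnc
      rcases htot (v k) (v (k + 1)) (hAdj_ne (hadjv k)) with h | h
      · exact h
      · exact absurd h hpnc
  -- chain along the cycle
  have hchain : ∀ t, i + t < j → r (v i) (v (i + t + 1)) := by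
    intro t
    induction t with
    | zero => intro h; simpa using hstep i le_rfl (by omega)
    | succ t ih =>
        intro h
        have h1 := ih (by omega)
        have h2 := hstep (i + t + 1) (by omega) (by omega)
        exact htr h1 (by rw [show i + (t + 1) + 1 = i + t + 1 + 1 by omega]; exact h2)
  have hfinal := hchain (j - i - 1) (by omega)
  rw [show i + (j - i - 1) + 1 = j by omega, ← hvij] at hfinal
  exact hirr _ hfinal

lemma vc_card_le {α : Type*} [Fintype α] [DecidableEq α]
    (Y : Finset { p : α × α // p.1 ≠ p.2 }) (hsh : Shatters (linearOrderClass α) ↑Y)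
    (hne : Y.Nonempty) :
    Y.card + 1 ≤ (Y.image (fun p => p.val.1) ∪ Y.image (fun p => p.val.2)).card := by
  classical
  induction Y using Finset.strongInduction with
  | _ Y ih =>
    obtain ⟨p, hpY, u, hu, huniq⟩ := vc_leaf hsh hne
    set Y' := Y.erase p with hY'
    have hss : Y' ⊂ Y := Finset.erase_ssubset hpY
    have hsh' : Shatters (linearOrderClass α) ↑Y' :=
      vc_shatters_mono hsh (Finset.coe_subset.mpr (Finset.erase_subset _ _))
    have huY : u ∈ Y.image (fun p => p.val.1) ∪ Y.image (fun p => p.val.2) := by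
      rcases hu with hu | hu <;> rw [Finset.mem_union]
      · exact Or.inl (Finset.mem_image.mpr ⟨p, hpY, hu.symm⟩)
      · exact Or.inr (Finset.mem_image.mpr ⟨p, hpY, hu.symm⟩)
    rcases Y'.eq_empty_or_nonempty with hY'e | hY'ne
    · -- Y = {p}
      have hYp : Y = {p} := by
        apply Finset.eq_singleton_iff_unique_mem.mpr
        refine ⟨hpY, fun q hq => ?_⟩
        by_contra hqp
        have : q ∈ Y' := Finset.mem_erase.mpr ⟨hqp, hq⟩
        rw [hY'e] at this
        exact absurd this (Finset.notMem_empty q)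
      subst hYp
      have h2 : ({p} : Finset _).image (fun p => p.val.1) ∪
          ({p} : Finset _).image (fun p => p.val.2) = {p.val.1, p.val.2} := by
        simp only [Finset.image_singleton]
        ext x
        simp [Finset.mem_union, Finset.mem_insert]
      rw [h2, Finset.card_singleton, Finset.card_insert_of_notMem
        (by simpa using p.2), Finset.card_singleton]
    · have hIH := ih Y' hss hsh' hY'ne
      have hunotin : u ∉ Y'.image (fun p => p.val.1) ∪ Y'.image (fun p => p.val.2) := by
        intro hu'
        rcases Finset.mem_union.mp hu' with h | h <;>
          obtain ⟨q, hqY', hq⟩ := Finset.mem_image.mp h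
        · have := huniq q (Finset.mem_of_mem_erase hqY') (Or.inl hq)
          rw [this] at hqY'
          exact absurd hqY' (Finset.notMem_erase p Y)
        · have := huniq q (Finset.mem_of_mem_erase hqY') (Or.inr hq)
          rw [this] at hqY'
          exact absurd hqY' (Finset.notMem_erase p Y)
      have hsubVS : Y'.image (fun p => p.val.1) ∪ Y'.image (fun p => p.val.2) ⊆
          (Y.image (fun p => p.val.1) ∪ Y.image (fun p => p.val.2)).erase u := by
        rw [Finset.subset_erase]
        constructor
        · apply Finset.union_subset_union <;>
            exact Finset.image_subset_image (Finset.erase_subset _ _)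
        · exact hunotin
      have hcard1 : (Y'.image (fun p => p.val.1) ∪ Y'.image (fun p => p.val.2)).card ≤
          (Y.image (fun p => p.val.1) ∪ Y.image (fun p => p.val.2)).card - 1 := by
        have := Finset.card_le_card hsubVS
        rwa [Finset.card_erase_of_mem huY] at this
      have hYcard : Y'.card = Y.card - 1 := Finset.card_erase_of_mem hpY
      have hY1 : 1 ≤ Y.card := Finset.card_pos.mpr hne
      have hV1 : 1 ≤ (Y.image (fun p => p.val.1) ∪ Y.image (fun p => p.val.2)).card :=
        Finset.card_pos.mpr ⟨u, huY⟩
      omega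

lemma vc_upper {α : Type*} [Fintype α] (hN : 2 ≤ Fintype.card α)
    (Y : Finset { p : α × α // p.1 ≠ p.2 }) (hsh : Shatters (linearOrderClass α) ↑Y) :
    Y.card ≤ Fintype.card α - 1 := by
  classical
  rcases Y.eq_empty_or_nonempty with h | h
  · subst h; simp
  · have h1 := vc_card_le Y hsh h
    have h2 : (Y.image (fun p => p.val.1) ∪ Y.image (fun p => p.val.2)).card ≤
        Fintype.card α := Finset.card_le_univ _
    omega


/-- for `|S| = N ≥ 2`, the VC dimension of the class of strict linear
orders on `S` over ordered pairs of distinct elements equals `N - 1`. -/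
theorem stmt4 {α : Type*} [Fintype α] (hN : 2 ≤ Fintype.card α) :
    VCD (linearOrderClass α) = Fintype.card α - 1 := by
  classical
  obtain ⟨M, hM⟩ : ∃ M, Fintype.card α = M + 1 := ⟨Fintype.card α - 1, by omega⟩
  obtain ⟨Y₀, hY₀sh, hY₀card⟩ := vc_lower hM
  rw [VCD]
  apply le_antisymm
  · apply csSup_le
    · exact ⟨M, Y₀, hY₀sh, hY₀card⟩
    · rintro d ⟨Y, hsh, rfl⟩
      exact vc_upper hN Y hsh
  · apply le_csSup
    · exact ⟨Fintype.card α - 1, by rintro d ⟨Y, hsh, rfl⟩; exact vc_upper hN Y hsh⟩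
    · exact ⟨Y₀, hY₀sh, by omega⟩
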